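/- Let 0 < x < 1/2 and (1+x)/3 < α < 1 - x, with P = (x, α√3), a = (0,√3), U₀ = (2 - x, √3(1 + x(2-x)/(3(1-α)))), and U₋ = (-2 + x, √3(1 - x(2-x)/(3(1-α)))). Then the line through P and a is the perpendicular bisector of the segment U₀U₋; i.e., (P - a) · (U₀ - U₋) = 0 and dist(a, U₀) = dist(a, U₋). -/

import Mathlib

open RealInnerProductSpace

theorem stmt_19 (x α : ℝ) (hx0 : 0 < x) (hx : x < 1/2)
    (hα0 : (1 + x)/3 < α) (hα1 : α < 1 - x) :
    let P : EuclideanSpace ℝ (Fin 2) := !₂[x, α * Real.sqrt 3]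
    let a : EuclideanSpace ℝ (Fin 2) := !₂[0, Real.sqrt 3]
    let U₀ : EuclideanSpace ℝ (Fin 2) := !₂[2 - x, Real.sqrt 3 * (1 + x * (2 - x) / (3 * (1 - α)))]
    let Uminus : EuclideanSpace ℝ (Fin 2) := !₂[-2 + x, Real.sqrt 3 * (1 - x * (2 - x) / (3 * (1 - α)))]
    ⟪P - a, U₀ - Uminus⟫ = 0 ∧ dist a U₀ = dist a Uminus := by
  intro P a U₀ Uminus
  have hα : (1 : ℝ) - α ≠ 0 := by nlinarith
  have h3 : Real.sqrt 3 * Real.sqrt 3 = 3 := Real.mul_self_sqrt (by norm_num)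
  constructor
  · simp only [P, a, U₀, Uminus, PiLp.inner_apply, Fin.sum_univ_two, PiLp.sub_apply,
      Matrix.cons_val_zero, Matrix.cons_val_one, Matrix.head_cons, RCLike.inner_apply,
      conj_trivial]
    field_simp
    linear_combination (α - 1) * 2 * x * (2 - x) * h3
  · simp only [EuclideanSpace.dist_eq, Fin.sum_univ_two, a, U₀, Uminus,
      Matrix.cons_val_zero, Matrix.cons_val_one, Matrix.head_cons]
    congr 1
    simp only [Real.dist_eq, sq_abs]
    ring
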